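/- Let 𝒜 be a unital associative complex *-algebra, let ℏ ≠ 0 be real, let C_H, Z ∈ 𝒜 satisfy C_H* = C_H, Z* = Z and [Z, C_H] = iℏ·1, and fix t ∈ ℝ. Let Z' := {A ∈ 𝒜 : [A, Z] = 0} and let 𝓕 ⊆ Z' be a unital *-subalgebra. Assume: (i) 𝒜 is the direct sum of the ℂ-subspaces Z' and 𝒜C_H := {A·C_H : A ∈ 𝒜} (that is, Z' + 𝒜C_H = 𝒜 and Z' ∩ 𝒜C_H = {0}); and (ii) Z' is the direct sum of the ℂ-subspaces 𝓕 and (Z − t·1)·Z' := {(Z − t·1)·B : B ∈ Z'}. Then for every ℂ-linear functional ω̃ : 𝓕 → ℂ with ω̃(1) = 1 and ω̃(F·F*) a nonnegative real for all F ∈ 𝓕, there exists exactly one ℂ-linear functional ω : 𝒜 → ℂ such that ω restricts to ω̃ on 𝓕, ω(Z) = t, and ω is almost-positive, i.e. ω(1) = 1, ω(A·C_H) = 0 for all A ∈ 𝒜, ω(B·B*) is a nonnegative real for all B ∈ Z', and ω(Z·A) = ω(Z)·ω(A) for all A ∈ 𝒜. -/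

import Mathlib

/-- Given a deparameterization of C_H by the clock (Z, 𝓕) (direct sum
decompositions 𝒜 = Z' ⊕ 𝒜C_H and Z' = 𝓕 ⊕ (Z − t·1)Z'), every normalized positive
linear functional on 𝓕 extends uniquely to an almost-positive state ω on 𝒜 with
ω(Z) = t. -/
theorem stmt_11 {𝒜 : Type*} [Ring 𝒜] [Algebra ℂ 𝒜] [StarRing 𝒜] [StarModule ℂ 𝒜]
    (ℏ : ℝ) (hℏ : ℏ ≠ 0) (C_H Z : 𝒜)
    (hCH : star C_H = C_H) (hZ : star Z = Z)
    (hcomm : Z * C_H - C_H * Z = algebraMap ℂ 𝒜 (Complex.I * ℏ))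
    (t : ℝ)
    (F : StarSubalgebra ℂ 𝒜)
    (hFZ : (F : Set 𝒜) ⊆ (Subalgebra.centralizer ℂ ({Z} : Set 𝒜) : Set 𝒜))
    (hsum : ∀ x : 𝒜, ∃ b ∈ Subalgebra.centralizer ℂ ({Z} : Set 𝒜), ∃ a : 𝒜,
      x = b + a * C_H)
    (hint : ∀ b ∈ Subalgebra.centralizer ℂ ({Z} : Set 𝒜), ∀ a : 𝒜,
      b = a * C_H → b = 0)
    (hsum2 : ∀ b ∈ Subalgebra.centralizer ℂ ({Z} : Set 𝒜),
      ∃ f ∈ F, ∃ b₀ ∈ Subalgebra.centralizer ℂ ({Z} : Set 𝒜),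
        b = f + (Z - algebraMap ℂ 𝒜 t) * b₀)
    (hint2 : ∀ f ∈ F,
      (∃ b₀ ∈ Subalgebra.centralizer ℂ ({Z} : Set 𝒜),
        f = (Z - algebraMap ℂ 𝒜 t) * b₀) → f = 0)
    (μ : F →ₗ[ℂ] ℂ)
    (hμ1 : μ 1 = 1)
    (hμpos : ∀ f : F, ∃ r : ℝ, 0 ≤ r ∧ μ (f * star f) = (r : ℂ)) :
    ∃! ω : 𝒜 →ₗ[ℂ] ℂ,
      (∀ f : F, ω (f : 𝒜) = μ f) ∧
      ω Z = (t : ℂ) ∧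
      ω 1 = 1 ∧
      (∀ a : 𝒜, ω (a * C_H) = 0) ∧
      (∀ b ∈ Subalgebra.centralizer ℂ ({Z} : Set 𝒜),
        ∃ r : ℝ, 0 ≤ r ∧ ω (b * star b) = (r : ℂ)) ∧
      (∀ a : 𝒜, ω (Z * a) = ω Z * ω a) := by
  classical
  set B : Subalgebra ℂ 𝒜 := Subalgebra.centralizer ℂ ({Z} : Set 𝒜) with hBdef
  set T : 𝒜 := algebraMap ℂ 𝒜 (t : ℂ) with hTdef
  -- basic facts
  have hmemB : ∀ x : 𝒜, x ∈ B ↔ Z * x = x * Z := by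
    intro x
    rw [hBdef, Subalgebra.mem_centralizer_iff]
    constructor
    · intro h; exact h Z (Set.mem_singleton Z)
    · intro h g hg; rw [Set.mem_singleton_iff] at hg; rw [hg]; exact h
  have hZB : Z ∈ B := (hmemB Z).mpr rfl
  have hTB : ∀ x : 𝒜, T * x = x * T := fun x => Algebra.commutes (t : ℂ) x
  have hZtB : Z - T ∈ B := by
    rw [hmemB]
    simp only [mul_sub, sub_mul, hTB Z]
  have hcommB : ∀ b ∈ B, b * (Z - T) = (Z - T) * b := by
    intro b hb
    rw [hmemB] at hb
    simp only [mul_sub, sub_mul, hTB b, hb]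
  have hstarB : ∀ b ∈ B, star b ∈ B := by
    intro b hb
    rw [hmemB] at hb ⊢
    calc Z * star b = star (b * star Z) := by rw [star_mul, star_star]
      _ = star (b * Z) := by rw [hZ]
      _ = star (Z * b) := by rw [hb]
      _ = star b * star Z := by rw [star_mul]
      _ = star b * Z := by rw [hZ]
  have hstarT : star T = T := by
    rw [hTdef, ← algebraMap_star_comm]
    norm_num
  have hFB : ∀ f ∈ F, f ∈ B := fun f hf => hFZ hf
  -- submodules
  let BM : Submodule ℂ 𝒜 := Subalgebra.toSubmodule B
  let FM : Submodule ℂ 𝒜 := Subalgebra.toSubmodule F.toSubalgebra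
  let M : Submodule ℂ 𝒜 := LinearMap.range (LinearMap.mulRight ℂ C_H)
  let N : Submodule ℂ 𝒜 :=
    LinearMap.range ((LinearMap.mulLeft ℂ (Z - T)).comp BM.subtype)
  have hFMmem : ∀ x : 𝒜, x ∈ FM ↔ x ∈ F := fun x => Iff.rfl
  have hMmem : ∀ a : 𝒜, a * C_H ∈ M := fun a => ⟨a, rfl⟩
  have hNmem : ∀ c ∈ B, (Z - T) * c ∈ N := fun c hc => ⟨⟨c, hc⟩, rfl⟩
  have hNmem' : ∀ x ∈ N, ∃ c ∈ B, x = (Z - T) * c := by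
    rintro x ⟨⟨c, hc⟩, rfl⟩
    exact ⟨c, hc, rfl⟩
  have hMmem' : ∀ x ∈ M, ∃ a : 𝒜, x = a * C_H := by
    rintro x ⟨a, rfl⟩
    exact ⟨a, rfl⟩
  -- complementarity
  have hcompl : IsCompl FM (N ⊔ M) := by
    constructor
    · rw [Submodule.disjoint_def]
      intro x hxF hxNM
      obtain ⟨n, hn, m, hm, hnm⟩ := Submodule.mem_sup.mp hxNM
      obtain ⟨c, hc, rfl⟩ := hNmem' n hn
      obtain ⟨a, rfl⟩ := hMmem' m hm
      have hxB : x ∈ B := hFB x hxF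
      have hnB : (Z - T) * c ∈ B := B.mul_mem hZtB hc
      have hdiff : x - (Z - T) * c ∈ B := B.sub_mem hxB hnB
      have h0 : x - (Z - T) * c = 0 := by
        refine hint _ hdiff a ?_
        rw [← hnm]; abel
      have hx : x = (Z - T) * c := by
        rw [sub_eq_zero] at h0; exact h0
      exact hint2 x hxF ⟨c, hc, hx⟩
    · rw [codisjoint_iff_le_sup]
      intro x _
      obtain ⟨b, hb, a, rfl⟩ := hsum x
      obtain ⟨f, hf, c, hc, rfl⟩ := hsum2 b hb
      refine Submodule.add_mem _ (Submodule.add_mem _ ?_ ?_) ?_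
      · exact Submodule.mem_sup_left hf
      · exact Submodule.mem_sup_right (Submodule.mem_sup_left (hNmem c hc))
      · exact Submodule.mem_sup_right (Submodule.mem_sup_right (hMmem a))
  let π := FM.linearProjOfIsCompl (N ⊔ M) hcompl
  let μ' : FM →ₗ[ℂ] ℂ :=
    { toFun := fun x => μ ⟨x.1, x.2⟩
      map_add' := by intro x y; rw [← map_add]; rfl
      map_smul' := by intro c x; rw [← map_smul]; rfl }
  set ω : 𝒜 →ₗ[ℂ] ℂ := μ'.comp π with hωdef
  have hωF : ∀ (f : 𝒜) (hf : f ∈ F), ω f = μ ⟨f, hf⟩ := by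
    intro f hf
    have : π f = ⟨f, hf⟩ := Submodule.linearProjOfIsCompl_apply_left hcompl ⟨f, hf⟩
    simp only [hωdef, LinearMap.comp_apply, this]
    rfl
  have hω0 : ∀ y ∈ N ⊔ M, ω y = 0 := by
    intro y hy
    have : π y = 0 := Submodule.linearProjOfIsCompl_apply_right' hcompl hy
    simp only [hωdef, LinearMap.comp_apply, this, map_zero]
  have hkey : ∀ (f : 𝒜) (hf : f ∈ F) (y : 𝒜), y ∈ N ⊔ M → ω (f + y) = μ ⟨f, hf⟩ := by
    intro f hf y hy
    rw [map_add, hωF f hf, hω0 y hy, add_zero]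
  -- the six properties of ω
  have P1 : ∀ f : F, ω (f : 𝒜) = μ f := fun f => hωF f f.2
  have P3 : ω 1 = 1 := by
    rw [hωF 1 F.one_mem]
    convert hμ1 using 2
    rfl
  have P2 : ω Z = (t : ℂ) := by
    have hdec : Z = (t : ℂ) • (1 : 𝒜) + (Z - T) * 1 := by
      rw [mul_one, Algebra.smul_def, mul_one, ← hTdef]; abel
    have hy : (Z - T) * 1 ∈ N ⊔ M := Submodule.mem_sup_left (hNmem 1 B.one_mem)
    rw [hdec, map_add, hω0 _ hy, add_zero, map_smul, P3]
    simp
  have P4 : ∀ a : 𝒜, ω (a * C_H) = 0 :=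
    fun a => hω0 _ (Submodule.mem_sup_right (hMmem a))
  have P5 : ∀ b ∈ B, ∃ r : ℝ, 0 ≤ r ∧ ω (b * star b) = (r : ℂ) := by
    intro b hb
    obtain ⟨f, hf, c, hc, hbe⟩ := hsum2 b hb
    have hfB : f ∈ B := hFB f hf
    have hscB : star c ∈ B := hstarB c hc
    have hstarZt : star (Z - T) = Z - T := by rw [star_sub, hZ, hstarT]
    have hbstar : star b = star f + star c * (Z - T) := by
      rw [hbe, star_add, star_mul, hstarZt]
    set d : 𝒜 := f * star c + c * star f + c * (star c * (Z - T)) with hddef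
    have hdB : d ∈ B := by
      refine B.add_mem (B.add_mem (B.mul_mem hfB hscB) (B.mul_mem hc (hstarB f hfB))) ?_
      exact B.mul_mem hc (B.mul_mem hscB hZtB)
    have hcomm1 : (f * star c) * (Z - T) = (Z - T) * (f * star c) :=
      hcommB _ (B.mul_mem hfB hscB)
    have hiden : b * star b = f * star f + (Z - T) * d := by
      calc b * star b = (f + (Z - T) * c) * (star f + star c * (Z - T)) := by
            rw [hbstar, hbe]
        _ = f * star f + (f * star c) * (Z - T) + ((Z - T) * (c * star f)
              + (Z - T) * (c * (star c * (Z - T)))) := by noncomm_ring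
        _ = f * star f + (Z - T) * (f * star c) + ((Z - T) * (c * star f)
              + (Z - T) * (c * (star c * (Z - T)))) := by rw [hcomm1]
        _ = f * star f + (Z - T) * d := by rw [hddef]; noncomm_ring
    have hffF : f * star f ∈ F := mul_mem hf (star_mem hf)
    obtain ⟨r, hr, hμr⟩ := hμpos ⟨f, hf⟩
    refine ⟨r, hr, ?_⟩
    have : ω (b * star b) = μ ⟨f * star f, hffF⟩ := by
      rw [hiden]
      exact hkey _ hffF _ (Submodule.mem_sup_left (hNmem d hdB))
    rw [this, ← hμr]
    congr 1
  have P6 : ∀ a : 𝒜, ω (Z * a) = ω Z * ω a := by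
    intro a
    obtain ⟨b, hb, a', hae⟩ := hsum a
    obtain ⟨f, hf, c, hc, hbe⟩ := hsum2 b hb
    have hfB : f ∈ B := hFB f hf
    have hadec : a = f + ((Z - T) * c + a' * C_H) := by rw [hae, hbe]; abel
    have hya : (Z - T) * c + a' * C_H ∈ N ⊔ M :=
      Submodule.add_mem _ (Submodule.mem_sup_left (hNmem c hc))
        (Submodule.mem_sup_right (hMmem a'))
    have hωa : ω a = μ ⟨f, hf⟩ := by rw [hadec]; exact hkey f hf _ hya
    have hZdec : Z * a = (t : ℂ) • f +
        ((Z - T) * (f + Z * c) + (Z * a') * C_H) := by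
      rw [hadec]
      have h1 : Z * ((Z - T) * c) = (Z - T) * (Z * c) := by
        calc Z * ((Z - T) * c) = Z * (Z * c) - Z * (T * c) := by noncomm_ring
          _ = Z * (Z * c) - T * (Z * c) := by
                rw [show Z * (T * c) = T * (Z * c) from by
                  rw [← mul_assoc, ← mul_assoc, hTB Z]]
          _ = (Z - T) * (Z * c) := by noncomm_ring
      have h2 : Z * f = (t : ℂ) • f + (Z - T) * f := by
        rw [Algebra.smul_def, ← hTdef]; noncomm_ring
      calc Z * (f + ((Z - T) * c + a' * C_H))
          = Z * f + (Z * ((Z - T) * c) + (Z * a') * C_H) := by noncomm_ring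
        _ = ((t : ℂ) • f + (Z - T) * f) + ((Z - T) * (Z * c) + (Z * a') * C_H) := by
            rw [h1, h2]
        _ = (t : ℂ) • f + ((Z - T) * (f + Z * c) + (Z * a') * C_H) := by
            rw [mul_add]; abel
    have hyZ : (Z - T) * (f + Z * c) + (Z * a') * C_H ∈ N ⊔ M :=
      Submodule.add_mem _
        (Submodule.mem_sup_left (hNmem _ (B.add_mem hfB (B.mul_mem hZB hc))))
        (Submodule.mem_sup_right (hMmem _))
    have : ω (Z * a) = (t : ℂ) * μ ⟨f, hf⟩ := by
      rw [hZdec, map_add, hω0 _ hyZ, add_zero, map_smul]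
      simp only [RingHom.id_apply, smul_eq_mul, hωF f hf]
    rw [this, P2, hωa]
  refine ⟨ω, ⟨P1, P2, P3, P4, fun b hb => P5 b hb, P6⟩, ?_⟩
  -- uniqueness
  rintro ω' ⟨Q1, Q2, _, Q4, _, Q6⟩
  have hvan : ∀ c : 𝒜, ω' ((Z - T) * c) = 0 := by
    intro c
    have h1 : (Z - T) * c = Z * c - (t : ℂ) • c := by
      rw [Algebra.smul_def, ← hTdef]; noncomm_ring
    rw [h1, map_sub, map_smul, Q6 c, Q2]
    simp [smul_eq_mul]
  have hval : ∀ x : 𝒜, ∀ (f : 𝒜) (hf : f ∈ F), ∀ c : 𝒜, ∀ a : 𝒜,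
      x = f + ((Z - T) * c + a * C_H) → ∀ ν : 𝒜 →ₗ[ℂ] ℂ,
      (∀ g : F, ν (g : 𝒜) = μ g) → (∀ a : 𝒜, ν (a * C_H) = 0) →
      (∀ c : 𝒜, ν ((Z - T) * c) = 0) → ν x = μ ⟨f, hf⟩ := by
    intro x f hf c a hx ν hν1 hν2 hν3
    rw [hx, map_add, map_add, hν2, hν3, hν1 ⟨f, hf⟩]
    ring
  ext x
  obtain ⟨b, hb, a, hae⟩ := hsum x
  obtain ⟨f, hf, c, hc, hbe⟩ := hsum2 b hb
  have hx : x = f + ((Z - T) * c + a * C_H) := by rw [hae, hbe]; abel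
  have hvanω : ∀ c : 𝒜, ω ((Z - T) * c) = 0 := by
    intro c
    have h1 : (Z - T) * c = Z * c - (t : ℂ) • c := by
      rw [Algebra.smul_def, ← hTdef]; noncomm_ring
    rw [h1, map_sub, map_smul, P6 c, P2]
    simp [smul_eq_mul]
  rw [hval x f hf c a hx ω' Q1 Q4 hvan, hval x f hf c a hx ω P1 P4 hvanω]
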